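/- Let V be a vertex type, E : V → V → Prop an edge relation, and p a prime path of (V, E) that is not closed, with first vertex u. Then for every vertex x with E x u, the vertex x occurs in p at some position other than the last position of p. -/

import Mathlib

/-- A (directed) path in the graph `(V, E)`: a nonempty list of vertices in which
consecutive vertices are related by the edge relation `E`. -/
def IsPath {V : Type*} (E : V → V → Prop) (l : List V) : Prop :=
  l ≠ [] ∧ l.Chain' E

/-- A simple path: a path in which no vertex occurs more than once,
except that the first and last vertices may coincide. -/
def IsSimplePath {V : Type*} (E : V → V → Prop) (l : List V) : Prop :=
  IsPath E l ∧ l.dropLast.Nodup ∧ l.tail.Nodup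

/-- A closed path: it has at least two vertices and its first and last vertices coincide. -/
def IsClosedPath {V : Type*} (l : List V) : Prop :=
  2 ≤ l.length ∧ l.head? = l.getLast?

/-- A prime path: a maximal simple path, i.e. a simple path that is not a proper
subpath (contiguous sublist) of any simple path. -/
def IsPrimePath {V : Type*} (E : V → V → Prop) (l : List V) : Prop :=
  IsSimplePath E l ∧ ∀ q : List V, IsSimplePath E q → l <:+: q → l = q

/-- If `p` is a non-closed prime path with first vertex `u`, then every
in-neighbor `x` of `u` occurs in `p` at some position other than the last one. -/
theorem primePath_pred_mem_dropLast {V : Type*} (E : V → V → Prop)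
    (p : List V) (u : V) (hp : IsPrimePath E p) (hnc : ¬ IsClosedPath p)
    (hu : p.head? = some u) (x : V) (hx : E x u) :
    x ∈ p.dropLast := by
  obtain ⟨⟨⟨hne, hchain⟩, hdl, htl⟩, hmax⟩ := hp
  by_contra hxd
  -- p = u :: t
  obtain ⟨t, rfl⟩ : ∃ t, p = u :: t := by
    cases p with
    | nil => simp at hu
    | cons a t => exact ⟨t, by simpa using congrArg (Option.getD · a) hu⟩
  -- u ∉ t, since p is not closed
  have hut : u ∉ t := by
    intro hmem
    cases t with
    | nil => simp at hmem
    | cons b s =>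
      have hdl' : u ∉ (b :: s).dropLast := by
        simpa [List.dropLast] using (List.nodup_cons.mp (by simpa using hdl)).1
      have : u ∈ (b :: s).dropLast ++ [(b :: s).getLast (by simp)] := by
        rw [List.dropLast_append_getLast]; exact hmem
      have hlast : u = (b :: s).getLast (by simp) := by
        rcases List.mem_append.mp this with h | h
        · exact absurd h hdl'
        · simpa using h
      apply hnc
      constructor
      · simp [Nat.succ_le_succ, Nat.succ_le_succ (Nat.zero_le _)]
      · rw [List.getLast?_eq_getLast (l := u :: b :: s) (by simp)]
        simp [List.getLast_cons, ← hlast]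
    
  -- x :: u :: t is a simple path
  have hsimple : IsSimplePath E (x :: u :: t) := by
    refine ⟨⟨by simp, ?_⟩, ?_, ?_⟩
    · exact List.isChain_cons_cons.mpr ⟨hx, by simpa [List.Chain'] using hchain⟩
    · rw [List.dropLast_cons₂]
      exact List.nodup_cons.mpr ⟨by simpa using hxd, hdl⟩
    · exact List.nodup_cons.mpr ⟨hut, by simpa using htl⟩
  have hinf : (u :: t) <:+: (x :: u :: t) := (List.suffix_cons x (u :: t)).isInfix
  have := hmax _ hsimple hinf
  exact absurd (congrArg List.length this) (by simp)
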